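/- Let G be a k-reciprocal transmission regular connected graph on n ≥ 2 vertices and α ∈ [0,1]. Then RD_α(G) is positive semidefinite if and only if α ≥ α₀ = −λ_min(RD(G)) / (k − λ_min(RD(G))), where λ_min(RD(G)) denotes the smallest eigenvalue of the reciprocal distance matrix RD(G). -/

import Mathlib

open Matrix BigOperators Finset

/-- The reciprocal distance (Harary) matrix of a graph. -/
noncomputable def RDmat {V : Type*} [Fintype V] [DecidableEq V] (G : SimpleGraph V) :
    Matrix V V ℝ :=
  Matrix.of fun i j => if i = j then 0 else (1 : ℝ) / (G.dist i j)

/-- The reciprocal transmission of a vertex. -/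
noncomputable def RTr {V : Type*} [Fintype V] [DecidableEq V] (G : SimpleGraph V) (v : V) : ℝ :=
  ∑ u ∈ Finset.univ.erase v, (1 : ℝ) / (G.dist u v)

/-- The generalized reciprocal distance matrix `RD_α(G) = α RT(G) + (1-α) RD(G)`. -/
noncomputable def RDalpha {V : Type*} [Fintype V] [DecidableEq V] (G : SimpleGraph V) (α : ℝ) :
    Matrix V V ℝ :=
  α • Matrix.diagonal (RTr G) + (1 - α) • RDmat G

/-- The `i`-th largest eigenvalue (1-indexed, with multiplicity) of a real matrix,
obtained from the roots of its characteristic polynomial sorted decreasingly. -/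
noncomputable def eigDesc {V : Type*} [Fintype V] [DecidableEq V] (M : Matrix V V ℝ) (i : ℕ) : ℝ :=
  ((M.charpoly.roots.sort (· ≤ ·)).reverse).getD (i - 1) 0

/-- The spectral radius (largest eigenvalue) of a real symmetric matrix. -/
noncomputable def specRadius {V : Type*} [Fintype V] [DecidableEq V] (M : Matrix V V ℝ) : ℝ :=
  eigDesc M 1

/-- The join of two graphs. -/
def gjoin {V₁ V₂ : Type*} (G₁ : SimpleGraph V₁) (G₂ : SimpleGraph V₂) :
    SimpleGraph (V₁ ⊕ V₂) where
  Adj x y := match x, y with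
    | Sum.inl a, Sum.inl b => G₁.Adj a b
    | Sum.inr a, Sum.inr b => G₂.Adj a b
    | Sum.inl _, Sum.inr _ => True
    | Sum.inr _, Sum.inl _ => True
  symm := ⟨by rintro (a|a) (b|b) h <;> first | exact G₁.adj_symm h | exact G₂.adj_symm h | trivial⟩
  loopless := ⟨by rintro (a|a) h <;> first | exact G₁.loopless.irrefl a h | exact G₂.loopless.irrefl a h | exact G₁.irrefl h | exact G₂.irrefl h⟩

section RDhelpers

open Polynomial

variable {n : Type*} [Fintype n] [DecidableEq n]

private lemma charpoly_conj' (B C A : Matrix n n ℝ) (hBC : B * C = 1) (hCB : C * B = 1) :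
    (B * A * C).charpoly = A.charpoly := by
  have key : charmatrix (B * A * C) =
      (Polynomial.C : ℝ →+* ℝ[X]).mapMatrix B * charmatrix A *
        (Polynomial.C : ℝ →+* ℝ[X]).mapMatrix C := by
    unfold charmatrix
    have hcomm := (Matrix.scalar_commute (X : ℝ[X]) (fun r' => mul_comm _ _)
      ((Polynomial.C : ℝ →+* ℝ[X]).mapMatrix B)).eq
    rw [mul_sub, sub_mul, ← hcomm, mul_assoc (Matrix.scalar n (X : ℝ[X])),
      ← RingHom.map_mul Polynomial.C.mapMatrix, hBC, RingHom.map_one, mul_one,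
      ← RingHom.map_mul Polynomial.C.mapMatrix, ← RingHom.map_mul Polynomial.C.mapMatrix,
      mul_assoc]
  unfold Matrix.charpoly
  rw [key, det_mul, det_mul, mul_comm, ← mul_assoc, ← det_mul,
    ← RingHom.map_mul Polynomial.C.mapMatrix, hCB, RingHom.map_one, det_one, one_mul]

private lemma charpoly_diag' (d : n → ℝ) :
    (Matrix.diagonal d).charpoly = ∏ i, (X - Polynomial.C (d i)) := by
  have : charmatrix (Matrix.diagonal d) = Matrix.diagonal fun i => X - Polynomial.C (d i) := by
    ext i j
    by_cases h : i = j
    · subst h; simp [charmatrix_apply, Matrix.diagonal_apply]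
    · simp [charmatrix_apply, Matrix.diagonal_apply, h]
  rw [Matrix.charpoly, this, det_diagonal]

private lemma charpoly_eq_zero_matrix {A : Matrix n n ℝ} (hA : A.IsHermitian)
    (h : ∀ i, hA.eigenvalues i = 0) : A = 0 := by
  have hsp := hA.spectral_theorem
  have : Matrix.diagonal ((RCLike.ofReal : ℝ → ℝ) ∘ hA.eigenvalues) = 0 := by
    rw [show (RCLike.ofReal : ℝ → ℝ) ∘ hA.eigenvalues = fun _ => 0 by funext i; simp [h i]]
    exact Matrix.diagonal_zero
  rw [this, map_zero] at hsp
  exact hsp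

private lemma charpoly_roots_herm {A : Matrix n n ℝ} (hA : A.IsHermitian) :
    A.charpoly.roots = Finset.univ.val.map hA.eigenvalues := by
  have hU := (Matrix.mem_unitaryGroup_iff).mp (hA.eigenvectorUnitary).2
  have hU' := (Matrix.mem_unitaryGroup_iff').mp (hA.eigenvectorUnitary).2
  have hsp := hA.spectral_theorem
  have hof : (RCLike.ofReal : ℝ → ℝ) ∘ hA.eigenvalues = hA.eigenvalues := by
    funext i; simp
  rw [hof] at hsp
  have h1 : A.charpoly = (Matrix.diagonal hA.eigenvalues).charpoly := by
    conv_lhs => rw [hsp]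
    exact charpoly_conj' _ _ _ hU hU'
  rw [h1, charpoly_diag']
  have h2 : (∏ i, (X - Polynomial.C (hA.eigenvalues i))) =
      ((Finset.univ.val.map hA.eigenvalues).map fun a => X - Polynomial.C a).prod := by
    rw [Multiset.map_map]; rfl
  rw [h2, Polynomial.roots_multiset_prod_X_sub_C]

private lemma eval_charpoly' (A : Matrix n n ℝ) (t : ℝ) :
    A.charpoly.eval t = (t • (1 : Matrix n n ℝ) - A).det := by
  rw [Matrix.charpoly, Polynomial.eval, ← Polynomial.coe_eval₂RingHom, RingHom.map_det]
  congr 1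
  ext i j
  by_cases h : i = j
  · subst h
    simp [charmatrix_apply, Matrix.diagonal_apply, Matrix.one_apply, Matrix.smul_apply]
  · simp [charmatrix_apply, Matrix.diagonal_apply, Matrix.one_apply, Matrix.smul_apply, h]

private lemma mem_roots_of_eigenvector' {A : Matrix n n ℝ} {t : ℝ} {v : n → ℝ} (hv : v ≠ 0)
    (h : A *ᵥ v = t • v) : t ∈ A.charpoly.roots := by
  rw [Polynomial.mem_roots (A.charpoly_monic.ne_zero)]
  rw [Polynomial.IsRoot, eval_charpoly']
  rw [← Matrix.exists_mulVec_eq_zero_iff]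
  refine ⟨v, hv, ?_⟩
  rw [Matrix.sub_mulVec, h, Matrix.smul_mulVec, Matrix.one_mulVec, sub_self]

private lemma eigDesc_min' {V : Type*} [Fintype V] [DecidableEq V] {M : Matrix V V ℝ}
    (hcard : Multiset.card M.charpoly.roots = Fintype.card V)
    (hn : 1 ≤ Fintype.card V) :
    eigDesc M (Fintype.card V) ∈ M.charpoly.roots ∧
      ∀ x ∈ M.charpoly.roots, eigDesc M (Fintype.card V) ≤ x := by
  set l := M.charpoly.roots.sort (· ≤ ·) with hl
  have hlen : l.length = Fintype.card V := by rw [hl, Multiset.length_sort, hcard]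
  have h0 : Fintype.card V - 1 < l.reverse.length := by
    rw [List.length_reverse, hlen]; omega
  have h0' : 0 < l.length := by omega
  have hval : eigDesc M (Fintype.card V) = l[0]'h0' := by
    rw [eigDesc, List.getD_eq_getElem _ _ h0, List.getElem_reverse]
    congr 1
    omega
  have hsorted := Multiset.pairwise_sort M.charpoly.roots (· ≤ ·)
  rw [← hl] at hsorted
  constructor
  · rw [hval, ← Multiset.mem_sort (r := (· ≤ ·)), ← hl]
    exact List.getElem_mem _
  · intro x hx
    rw [← Multiset.mem_sort (r := (· ≤ ·)), ← hl, List.mem_iff_getElem] at hx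
    obtain ⟨j, hj, rfl⟩ := hx
    rw [hval]
    rcases Nat.eq_zero_or_pos j with h | h
    · subst h; exact le_rfl
    · exact (List.pairwise_iff_getElem.mp hsorted 0 j h0' hj h)

end RDhelpers

private lemma RDmat_isHermitian {V : Type*} [Fintype V] [DecidableEq V] (G : SimpleGraph V) :
    (RDmat G).IsHermitian := by
  ext i j
  simp only [RDmat, conjTranspose_apply, of_apply, star_trivial]
  rcases eq_or_ne i j with h | h
  · subst h; rfl
  · rw [if_neg h, if_neg (Ne.symm h), SimpleGraph.dist_comm]

/-- Proposition 3.10: for a `k`-reciprocal transmission regular graph, `RD_α(G)` is positive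
semidefinite iff `α ≥ -λ_min(RD(G)) / (k - λ_min(RD(G)))`. -/
theorem stmt12 {V : Type*} [Fintype V] [DecidableEq V] (G : SimpleGraph V) (hG : G.Connected)
    (hn : 2 ≤ Fintype.card V) (k : ℝ) (hreg : ∀ w : V, RTr G w = k)
    (α : ℝ) (hα : α ∈ Set.Icc (0 : ℝ) 1) :
    (RDalpha G α).PosSemidef ↔
      (-(eigDesc (RDmat G) (Fintype.card V))) /
        (k - eigDesc (RDmat G) (Fintype.card V)) ≤ α := by
  obtain ⟨hα0, hα1⟩ := hα
  set M := RDmat G with hMdef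
  have hM : M.IsHermitian := RDmat_isHermitian G
  have hroots := charpoly_roots_herm hM
  have hcard : Multiset.card M.charpoly.roots = Fintype.card V := by
    rw [hroots]; simp
  obtain ⟨hμmem, hμmin⟩ := eigDesc_min' hcard (by omega)
  set μ := eigDesc M (Fintype.card V) with hμdef
  obtain ⟨a, b, hab⟩ := Fintype.exists_pair_of_one_lt_card (by omega : 1 < Fintype.card V)
  have hk : 0 < k := by
    rw [← hreg a, RTr]
    apply Finset.sum_pos
    · intro u hu
      have hu' : u ≠ a := (Finset.mem_erase.mp hu).1
      have hd := hG.pos_dist_of_ne hu'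
      exact div_pos one_pos (by exact_mod_cast hd)
    · exact ⟨b, Finset.mem_erase.mpr ⟨hab.symm, Finset.mem_univ b⟩⟩
  have heigmem : ∀ i, hM.eigenvalues i ∈ M.charpoly.roots := fun i => by
    rw [hroots]
    exact Multiset.mem_map_of_mem _ (Finset.mem_univ i)
  have hμneg : μ < 0 := by
    by_contra hc
    push_neg at hc
    have hsum : ∑ i, hM.eigenvalues i = 0 := by
      have hsplits : M.charpoly.Splits := by
        rw [Polynomial.splits_iff_card_roots, hcard, Matrix.charpoly_natDegree_eq_dim]
      have htr := Matrix.trace_eq_sum_roots_charpoly_of_splits hsplits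
      have htr0 : M.trace = 0 := by
        simp [Matrix.trace, Matrix.diag, hMdef, RDmat]
      rw [htr0, hroots] at htr
      exact htr.symm
    have hall : ∀ i, hM.eigenvalues i = 0 := fun i =>
      (Finset.sum_eq_zero_iff_of_nonneg
        (fun j _ => le_trans hc (hμmin _ (heigmem j)))).mp hsum i (Finset.mem_univ i)
    have hzero : M = 0 := charpoly_eq_zero_matrix hM hall
    have hMab : M a b = 0 := by rw [hzero]; rfl
    rw [hMdef] at hMab
    simp only [RDmat, of_apply, if_neg hab] at hMab
    have hd := hG.pos_dist_of_ne hab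
    have : (0:ℝ) < 1 / (G.dist a b) := div_pos one_pos (by exact_mod_cast hd)
    linarith
  have hkμ : 0 < k - μ := by linarith
  have hdiag : Matrix.diagonal (RTr G) = Matrix.diagonal (fun _ : V => k) := by
    rw [show RTr G = (fun _ : V => k) from funext hreg]
  have hdmul : ∀ v : V → ℝ, Matrix.diagonal (fun _ : V => k) *ᵥ v = k • v := by
    intro v
    funext x
    rw [Matrix.mulVec_diagonal]
    simp
  have hmul : ∀ (t : ℝ) (v : V → ℝ), M *ᵥ v = t • v →
      RDalpha G α *ᵥ v = (α * k + (1 - α) * t) • v := by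
    intro t v hv
    rw [RDalpha, Matrix.add_mulVec, Matrix.smul_mulVec, Matrix.smul_mulVec, hdiag,
      hdmul, ← hMdef, hv]
    funext x
    simp only [Pi.add_apply, Pi.smul_apply, smul_eq_mul]
    ring
  constructor
  · intro hPSD
    obtain ⟨i, -, hi⟩ : ∃ i ∈ Finset.univ.val, hM.eigenvalues i = μ := by
      rw [hroots] at hμmem
      exact Multiset.mem_map.mp hμmem
    set v : V → ℝ := ⇑(hM.eigenvectorBasis i) with hvdef
    have hvz : v ≠ 0 := by
      intro h0
      apply hM.eigenvectorBasis.orthonormal.ne_zero i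
      ext x
      exact congrFun h0 x
    have hv : M *ᵥ v = μ • v := by rw [hM.mulVec_eigenvectorBasis, hi]
    have hq := hPSD.dotProduct_mulVec_nonneg v
    have hstar : star v = v := by
      funext x
      simp
    rw [hmul μ v hv, hstar, dotProduct_smul, smul_eq_mul] at hq
    have hvv : 0 < v ⬝ᵥ v :=
      lt_of_le_of_ne (Finset.sum_nonneg fun _ _ => mul_self_nonneg _)
        (Ne.symm (fun h => hvz (dotProduct_self_eq_zero.mp h)))
    have hc : 0 ≤ α * k + (1 - α) * μ := by nlinarith [hq, hvv]
    rw [div_le_iff₀ hkμ]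
    linarith
  · intro hineq
    have hineq' : -μ ≤ α * (k - μ) := (div_le_iff₀ hkμ).mp hineq
    have hherm : (RDalpha G α).IsHermitian := by
      show (RDalpha G α)ᴴ = RDalpha G α
      rw [RDalpha]
      rw [Matrix.conjTranspose_add, Matrix.conjTranspose_smul, Matrix.conjTranspose_smul,
        (Matrix.isHermitian_diagonal (RTr G)).eq, hM.eq]
      simp
      rfl
    apply hherm.posSemidef_iff_eigenvalues_nonneg.mpr
    intro i
    rw [Pi.zero_apply]
    set ν := hherm.eigenvalues i with hνdef
    set w : V → ℝ := ⇑(hherm.eigenvectorBasis i) with hwdef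
    have hwz : w ≠ 0 := by
      intro h0
      apply hherm.eigenvectorBasis.orthonormal.ne_zero i
      ext x
      exact congrFun h0 x
    have hw : RDalpha G α *ᵥ w = ν • w := hherm.mulVec_eigenvectorBasis i
    obtain ⟨x, hx⟩ := Function.ne_iff.mp hwz
    simp only [Pi.zero_apply] at hx
    rcases eq_or_lt_of_le hα1 with h1 | h1
    · -- α = 1
      have hw1 : RDalpha G α *ᵥ w = k • w := by
        rw [RDalpha, h1]
        simp only [sub_self, zero_smul, add_zero, one_smul]
        rw [hdiag]
        exact hdmul w
      have hνk : ν = k := by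
        have hx2 := congrFun (hw.symm.trans hw1) x
        simp only [Pi.smul_apply, smul_eq_mul] at hx2
        exact mul_right_cancel₀ hx hx2
      rw [hνk]
      linarith
    · have h1' : 0 < 1 - α := by linarith
      set t := (ν - α * k) / (1 - α) with htdef
      have hMw : M *ᵥ w = t • w := by
        have hrd : RDalpha G α *ᵥ w = α • (k • w) + (1 - α) • (M *ᵥ w) := by
          rw [RDalpha, Matrix.add_mulVec, Matrix.smul_mulVec, Matrix.smul_mulVec,
            hdiag, hdmul, ← hMdef]
        rw [hrd] at hw
        funext y
        have hy := congrFun hw y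
        simp only [Pi.add_apply, Pi.smul_apply, smul_eq_mul] at hy ⊢
        rw [htdef]
        field_simp
        linarith
      have ht : t ∈ M.charpoly.roots := mem_roots_of_eigenvector' hwz hMw
      have hμt := hμmin t ht
      have hν : ν = α * k + (1 - α) * t := by
        rw [htdef]
        field_simp
        ring
      rw [hν]
      nlinarith [mul_nonneg (le_of_lt h1') (sub_nonneg.mpr hμt)]
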